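/- Let G be a finite simple graph with no isolated vertices, H a finite simple graph, and α a locally constant H-labeling of G such that val(h) = m ≥ 1 for every h in the image of α. Define recursively Δ₁ = G, α₁ = α, Δ_{n+1} = Δ_n ⋈_{α_n} H with π_{n+1} : Δ_{n+1} → Δ_n the first-coordinate projection and α_{n+1}(x,{x,y}) = α_n(π_{n+1}(x),{π_{n+1}(x),π_{n+1}(y)}). Assume each Δ_n is nonempty with no isolated vertices. Then for all k ≥ n ≥ 1, every eigenvalue of the normalized Laplacian of Δ_n is an eigenvalue of the normalized Laplacian of Δ_k. -/

import Mathlib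

open Finset Filter

open scoped Classical

universe u v

variable {V : Type u} {W : Type v}

/-- The generalized zig-zag product of an `H`-labeled graph `(G, α)` with `H`.
The labeling `α : D(G) → V(H)` is encoded as `α : V → V → W`, where for adjacent
vertices `u, v` the value `α u v` represents `α(u, {u,v})`. -/
def zigzag (G : SimpleGraph V) (H : SimpleGraph W) (α : V → V → W) :
    SimpleGraph (V × W) where
  Adj p q := G.Adj p.1 q.1 ∧ H.Adj (α p.1 q.1) p.2 ∧ H.Adj (α q.1 p.1) q.2
  symm := by
    first
    | exact ⟨fun _ _ h => ⟨h.1.symm, h.2.2, h.2.1⟩⟩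
    | exact fun _ _ h => ⟨h.1.symm, h.2.2, h.2.1⟩
  loopless := by
    first
    | exact ⟨fun p h => G.irrefl h.1⟩
    | exact fun p h => G.irrefl h.1

/-- The vertex set of the zig-zag product `G ⋈_α H`:
pairs `(u, i)` such that some edge `e` of `G` is incident to `u` with `i`
adjacent to `α(u, e)` in `H`. -/
def zigzagVerts (G : SimpleGraph V) (H : SimpleGraph W) (α : V → V → W) :
    Set (V × W) :=
  {p | ∃ w, G.Adj p.1 w ∧ H.Adj (α p.1 w) p.2}

/-- The normalized Laplacian of a finite graph: `L(u,u) = 1`,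
`L(u,v) = -1/√(val u · val v)` if `u ∼ v`, and `0` otherwise. -/
noncomputable def normLap {X : Type*} [Fintype X] (G : SimpleGraph X) : Matrix X X ℝ :=
  fun x y =>
    if x = y then 1
    else if G.Adj x y then
      -(1 / Real.sqrt (((G.neighborSet x).ncard : ℝ) * ((G.neighborSet y).ncard : ℝ)))
    else 0

/-- A finite `H`-labeled graph: a finite vertex type, a simple graph on it and an
`H`-labeling. -/
structure FinLabGraph (W : Type u) : Type (u + 1) where
  V : Type u
  fin : Fintype V
  G : SimpleGraph V
  lab : V → V → W

/-- One step of the finite zig-zag tower: pass from `(Δ, α)` to `Δ ⋈_α H` (on its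
vertex set) with the labeling pulled back along the first-coordinate projection. -/
noncomputable def stepFLG {W : Type u} [Fintype W] (H : SimpleGraph W)
    (X : FinLabGraph W) : FinLabGraph W where
  V := ↥(zigzagVerts X.G H X.lab)
  fin := by haveI := X.fin; infer_instance
  G := (zigzag X.G H X.lab).induce (zigzagVerts X.G H X.lab)
  lab := fun x y => X.lab x.val.1 y.val.1

/-- The finite zig-zag tower `Δ₁ = (G, α)`, `Δ_{n+1} = Δ_n ⋈_{α_n} H`
(indexed from `0`). -/
noncomputable def towerFLG {W : Type u} [Fintype W] (H : SimpleGraph W)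
    (X : FinLabGraph W) : ℕ → FinLabGraph W
  | 0 => X
  | n + 1 => stepFLG H (towerFLG H X n)

/-- The normalized Laplacian of a finite labeled graph. -/
noncomputable def normLapFLG {W : Type u} (X : FinLabGraph W) : Matrix X.V X.V ℝ :=
  @normLap X.V X.fin X.G

/-- `μ` is an eigenvalue of the normalized Laplacian of the finite labeled graph `X`. -/
noncomputable def HasNormLapEigenvalue {W : Type u} (X : FinLabGraph W) (μ : ℝ) : Prop :=
  letI := X.fin
  ∃ x : X.V → ℝ, x ≠ 0 ∧ (normLapFLG X).mulVec x = μ • x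

section Aux

lemma mem_zigzagVerts_iff {V : Type u} {W : Type v} (G : SimpleGraph V) (H : SimpleGraph W)
    (α : V → V → W)
    (hlc : ∀ x y z : V, G.Adj x y → G.Adj x z → α x y = α x z)
    {u v : V} (huv : G.Adj u v) (j : W) :
    (v, j) ∈ zigzagVerts G H α ↔ H.Adj (α v u) j := by
  constructor
  · rintro ⟨w, hw, hj⟩
    rwa [hlc v w u hw huv.symm] at hj
  · intro hj
    exact ⟨u, huv.symm, hj⟩

lemma zigzag_induce_adj {V : Type u} {W : Type v} (G : SimpleGraph V) (H : SimpleGraph W)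
    (α : V → V → W)
    (hlc : ∀ x y z : V, G.Adj x y → G.Adj x z → α x y = α x z)
    (p q : ↥(zigzagVerts G H α)) :
    ((zigzag G H α).induce (zigzagVerts G H α)).Adj p q ↔ G.Adj p.1.1 q.1.1 := by
  constructor
  · intro h
    exact h.1
  · intro h
    refine ⟨h, ?_, ?_⟩
    · obtain ⟨w, hw, hi⟩ := p.2
      rwa [hlc p.1.1 w q.1.1 hw h] at hi
    · obtain ⟨w, hw, hj⟩ := q.2
      rwa [hlc q.1.1 w p.1.1 hw h.symm] at hj

lemma zigzag_degree {V : Type u} {W : Type v} [Fintype V] [Fintype W]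
    (G : SimpleGraph V) (H : SimpleGraph W) (α : V → V → W)
    (hlc : ∀ x y z : V, G.Adj x y → G.Adj x z → α x y = α x z)
    (m : ℕ)
    (hval : ∀ x y : V, G.Adj x y → (H.neighborSet (α x y)).ncard = m)
    (p : ↥(zigzagVerts G H α)) :
    (((zigzag G H α).induce (zigzagVerts G H α)).neighborSet p).ncard
      = m * (G.neighborSet p.1.1).ncard := by
  classical
  have e : (((zigzag G H α).induce (zigzagVerts G H α)).neighborSet p) ≃
      (Σ v : G.neighborSet p.1.1, H.neighborSet (α v.1 p.1.1)) :=
  { toFun := fun q =>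
      ⟨⟨q.1.1.1, (zigzag_induce_adj G H α hlc p q.1).mp q.2⟩,
       ⟨q.1.1.2, by
          have hadj : G.Adj p.1.1 q.1.1.1 := (zigzag_induce_adj G H α hlc p q.1).mp q.2
          exact (mem_zigzagVerts_iff G H α hlc hadj q.1.1.2).mp q.1.2⟩⟩
    invFun := fun vj =>
      ⟨⟨(vj.1.1, vj.2.1), ⟨p.1.1, (vj.1.2 : G.Adj p.1.1 vj.1.1).symm, vj.2.2⟩⟩,
       (zigzag_induce_adj G H α hlc p
         ⟨(vj.1.1, vj.2.1), ⟨p.1.1, (vj.1.2 : G.Adj p.1.1 vj.1.1).symm, vj.2.2⟩⟩).mpr vj.1.2⟩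
    left_inv := by rintro ⟨⟨⟨v, j⟩, hmem⟩, hadj⟩; rfl
    right_inv := by rintro ⟨⟨v, hv⟩, ⟨j, hj⟩⟩; rfl }
  rw [← Nat.card_coe_set_eq, Nat.card_congr e, Nat.card_eq_fintype_card,
    Fintype.card_sigma]
  have hterm : ∀ v : G.neighborSet p.1.1, Fintype.card (H.neighborSet (α v.1 p.1.1)) = m := by
    intro v
    rw [← Set.toFinset_card, ← Set.ncard_eq_toFinset_card']
    exact hval v.1 p.1.1 ((SimpleGraph.mem_neighborSet G p.1.1 v.1).mp v.2).symm
  rw [Finset.sum_congr rfl fun v _ => hterm v, Finset.sum_const, smul_eq_mul,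
    Finset.card_univ, ← Nat.card_eq_fintype_card, Nat.card_coe_set_eq, mul_comm]

lemma zigzag_lift_core {V : Type u} {W : Type v} [Fintype V] [Fintype W]
    (G : SimpleGraph V) (H : SimpleGraph W) (α : V → V → W)
    [instS : Fintype ↥(zigzagVerts G H α)]
    (hnoiso : ∀ x : V, ∃ y, G.Adj x y)
    (hlc : ∀ x y z : V, G.Adj x y → G.Adj x z → α x y = α x z)
    (m : ℕ) (hm : 1 ≤ m)
    (hval : ∀ x y : V, G.Adj x y → (H.neighborSet (α x y)).ncard = m)
    (μ : ℝ) (x : V → ℝ) (hx0 : x ≠ 0) (hx : (normLap G).mulVec x = μ • x) :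
    ∃ y : ↥(zigzagVerts G H α) → ℝ, y ≠ 0 ∧
      (normLap ((zigzag G H α).induce (zigzagVerts G H α))).mulVec y = μ • y := by
  classical
  have hdpos : ∀ v : V, 0 < ((G.neighborSet v).ncard : ℝ) := by
    intro v
    obtain ⟨w, hw⟩ := hnoiso v
    have : 0 < (G.neighborSet v).ncard :=
      (Set.ncard_pos (Set.toFinite _)).mpr ⟨w, hw⟩
    exact_mod_cast this
  have hm0 : (m : ℝ) ≠ 0 := by positivity
  have hadjΓ : ∀ p q : ↥(zigzagVerts G H α),
      ((zigzag G H α).induce (zigzagVerts G H α)).Adj p q ↔ G.Adj p.1.1 q.1.1 :=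
    zigzag_induce_adj G H α hlc
  have hdeg : ∀ q : ↥(zigzagVerts G H α),
      (((((zigzag G H α).induce (zigzagVerts G H α)).neighborSet q).ncard : ℕ) : ℝ)
        = (m : ℝ) * ((G.neighborSet q.1.1).ncard : ℝ) := by
    intro q
    rw [zigzag_degree G H α hlc m hval q]
    push_cast
    ring
  have entry : ∀ p q : ↥(zigzagVerts G H α),
      normLap ((zigzag G H α).induce (zigzagVerts G H α)) p q =
      if p = q then 1 else if G.Adj p.1.1 q.1.1 then
        -(1 / ((m : ℝ) * Real.sqrt (((G.neighborSet p.1.1).ncard : ℝ)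
          * ((G.neighborSet q.1.1).ncard : ℝ)))) else 0 := by
    intro p q
    unfold normLap
    by_cases hpq : p = q
    · simp [hpq]
    · rw [if_neg hpq, if_neg hpq]
      by_cases hadj : G.Adj p.1.1 q.1.1
      · rw [if_pos ((hadjΓ p q).mpr hadj), if_pos hadj, hdeg p, hdeg q]
        have hrw : ((m : ℝ) * ((G.neighborSet p.1.1).ncard : ℝ))
            * ((m : ℝ) * ((G.neighborSet q.1.1).ncard : ℝ))
            = (m : ℝ) ^ 2
              * (((G.neighborSet p.1.1).ncard : ℝ) * ((G.neighborSet q.1.1).ncard : ℝ)) := by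
          ring
        rw [hrw, Real.sqrt_mul (by positivity), Real.sqrt_sq (by positivity)]
      · rw [if_neg (fun hc => hadj ((hadjΓ p q).mp hc)), if_neg hadj]
  refine ⟨fun q => x q.1.1, ?_, ?_⟩
  · obtain ⟨u, hu⟩ : ∃ u, x u ≠ 0 := by
      by_contra hc
      push_neg at hc
      exact hx0 (funext hc)
    obtain ⟨w, hw⟩ := hnoiso u
    have hne : (H.neighborSet (α u w)).Nonempty := by
      apply Set.nonempty_of_ncard_ne_zero
      rw [hval u w hw]
      omega
    obtain ⟨i, hi⟩ := hne
    intro hcon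
    apply hu
    exact congrFun hcon ⟨(u, i), ⟨w, hw, hi⟩⟩
  · funext p
    have base : ∑ v : V, normLap G p.1.1 v * x v = μ * x p.1.1 := by
      simpa [Matrix.mulVec, dotProduct] using congrFun hx p.1.1
    have hGentry : ∀ v : V, normLap G p.1.1 v * x v =
        (if p.1.1 = v then x v else 0) +
        (if G.Adj p.1.1 v then
          -(1 / Real.sqrt (((G.neighborSet p.1.1).ncard : ℝ)
            * ((G.neighborSet v).ncard : ℝ))) * x v else 0) := by
      intro v
      unfold normLap
      by_cases huv : p.1.1 = v
      · simp [huv, SimpleGraph.irrefl]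
      · by_cases hadj : G.Adj p.1.1 v
        · simp [huv, hadj]
        · simp [huv, hadj]
    have hbase' : x p.1.1 + (∑ v : V, (if G.Adj p.1.1 v then
          -(1 / Real.sqrt (((G.neighborSet p.1.1).ncard : ℝ)
            * ((G.neighborSet v).ncard : ℝ))) * x v else 0))
        = μ * x p.1.1 := by
      rw [← base, Finset.sum_congr rfl fun v _ => hGentry v, Finset.sum_add_distrib]
      congr 1
      rw [Finset.sum_ite_eq]
      simp
    have main : (normLap ((zigzag G H α).induce (zigzagVerts G H α))).mulVec
        (fun q => x q.1.1) p = μ * x p.1.1 := by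
      calc (normLap ((zigzag G H α).induce (zigzagVerts G H α))).mulVec
              (fun q => x q.1.1) p
          = ∑ q : ↥(zigzagVerts G H α),
              normLap ((zigzag G H α).induce (zigzagVerts G H α)) p q * x q.1.1 := by
            simp [Matrix.mulVec, dotProduct]
        _ = ∑ q : ↥(zigzagVerts G H α), ((if p = q then x p.1.1 else 0) +
              (if G.Adj p.1.1 q.1.1 then
                -(1 / ((m : ℝ) * Real.sqrt (((G.neighborSet p.1.1).ncard : ℝ)
                  * ((G.neighborSet q.1.1).ncard : ℝ)))) * x q.1.1 else 0)) := by
            refine Finset.sum_congr rfl fun q _ => ?_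
            rw [entry p q]
            by_cases hpq : p = q
            · simp [hpq, SimpleGraph.irrefl]
            · by_cases hadj : G.Adj p.1.1 q.1.1 <;> simp [hpq, hadj]
        _ = x p.1.1 + ∑ q : ↥(zigzagVerts G H α),
              (if G.Adj p.1.1 q.1.1 then
                -(1 / ((m : ℝ) * Real.sqrt (((G.neighborSet p.1.1).ncard : ℝ)
                  * ((G.neighborSet q.1.1).ncard : ℝ)))) * x q.1.1 else 0) := by
            rw [Finset.sum_add_distrib, Finset.sum_ite_eq]
            simp
        _ = x p.1.1 + ∑ pr : V × W, (if pr ∈ zigzagVerts G H α then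
              (if G.Adj p.1.1 pr.1 then
                -(1 / ((m : ℝ) * Real.sqrt (((G.neighborSet p.1.1).ncard : ℝ)
                  * ((G.neighborSet pr.1).ncard : ℝ)))) * x pr.1 else 0) else 0) := by
            congr 1
            have hfin : (zigzagVerts G H α).toFinset
                = Finset.univ.filter (fun pr => pr ∈ zigzagVerts G H α) := by
              ext pr
              simp
            refine (Finset.sum_set_coe (s := zigzagVerts G H α)
              (f := fun pr : V × W => if G.Adj p.1.1 pr.1 then
                -(1 / ((m : ℝ) * Real.sqrt (((G.neighborSet p.1.1).ncard : ℝ)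
                  * ((G.neighborSet pr.1).ncard : ℝ)))) * x pr.1 else 0)).trans ?_
            rw [hfin, Finset.sum_filter]
        _ = x p.1.1 + ∑ v : V, (if G.Adj p.1.1 v then
              -(1 / Real.sqrt (((G.neighborSet p.1.1).ncard : ℝ)
                * ((G.neighborSet v).ncard : ℝ))) * x v else 0) := by
            congr 1
            rw [Fintype.sum_prod_type]
            refine Finset.sum_congr rfl fun v _ => ?_
            by_cases hadj : G.Adj p.1.1 v
            · simp only [hadj, if_true]
              have hmem : ∀ j : W, ((v, j) ∈ zigzagVerts G H α) ↔ H.Adj (α v p.1.1) j :=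
                fun j => mem_zigzagVerts_iff G H α hlc hadj j
              have hin : ∀ j : W, (if (v, j) ∈ zigzagVerts G H α then
                  -(1 / ((m : ℝ) * Real.sqrt (((G.neighborSet p.1.1).ncard : ℝ)
                    * ((G.neighborSet v).ncard : ℝ)))) * x v else 0)
                  = (if H.Adj (α v p.1.1) j then
                  -(1 / ((m : ℝ) * Real.sqrt (((G.neighborSet p.1.1).ncard : ℝ)
                    * ((G.neighborSet v).ncard : ℝ)))) * x v else 0) := by
                intro j
                by_cases hj : H.Adj (α v p.1.1) j
                · rw [if_pos hj, if_pos ((hmem j).mpr hj)]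
                · rw [if_neg hj, if_neg (fun hc => hj ((hmem j).mp hc))]
              rw [Finset.sum_congr rfl fun j _ => hin j, Finset.sum_ite,
                Finset.sum_const, Finset.sum_const_zero, add_zero, nsmul_eq_mul]
              have hcard : ((Finset.univ.filter
                  (fun j : W => H.Adj (α v p.1.1) j)).card : ℝ) = (m : ℝ) := by
                norm_cast
                have hfil : Finset.univ.filter (fun j : W => H.Adj (α v p.1.1) j)
                    = (H.neighborSet (α v p.1.1)).toFinset := by
                  ext j
                  simp
                rw [hfil, ← Set.ncard_eq_toFinset_card']
                exact hval v p.1.1 hadj.symm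
              rw [hcard]
              have hs : (0:ℝ) < Real.sqrt (((G.neighborSet p.1.1).ncard : ℝ)
                  * ((G.neighborSet v).ncard : ℝ)) :=
                Real.sqrt_pos.mpr (mul_pos (hdpos p.1.1) (hdpos v))
              rw [← mul_assoc, mul_neg, mul_one_div, div_mul_cancel_left₀ hm0, one_div]
            · simp [hadj]
        _ = μ * x p.1.1 := hbase'
    rw [main]
    simp

end Aux

lemma step_lift {W : Type u} [Fintype W] (H : SimpleGraph W) (X : FinLabGraph W)
    (hnoiso : ∀ x : X.V, ∃ y, X.G.Adj x y)
    (hlc : ∀ x y z : X.V, X.G.Adj x y → X.G.Adj x z → X.lab x y = X.lab x z)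
    (m : ℕ) (hm : 1 ≤ m)
    (hval : ∀ x y : X.V, X.G.Adj x y → (H.neighborSet (X.lab x y)).ncard = m)
    (μ : ℝ) (h : HasNormLapEigenvalue X μ) :
    HasNormLapEigenvalue (stepFLG H X) μ := by
  letI := X.fin
  obtain ⟨x, hx0, hx⟩ := h
  obtain ⟨y, hy0, hy⟩ := zigzag_lift_core X.G H X.lab (instS := (stepFLG H X).fin)
    hnoiso hlc m hm hval μ x hx0 hx
  exact ⟨y, hy0, hy⟩

/-- For a finite graph `G` with no isolated vertices, a finite graph
`H`, and a locally constant `H`-labeling `α` with `val(h) = m ≥ 1` on the image of `α`,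
if every term of the zig-zag tower `Δ₁ = G`, `Δ_{n+1} = Δ_n ⋈_{α_n} H` is nonempty with
no isolated vertices, then for all `k ≥ n`, every eigenvalue of the normalized
Laplacian of `Δ_n` is an eigenvalue of the normalized Laplacian of `Δ_k`. -/
theorem zigzag_tower_laplacian_spectrum {V W : Type u} [inst : Fintype V] [Fintype W]
    (G : SimpleGraph V) (H : SimpleGraph W) (α : V → V → W)
    (hG : ∀ x : V, ∃ y, G.Adj x y)
    (hlc : ∀ x y z : V, G.Adj x y → G.Adj x z → α x y = α x z)
    (m : ℕ) (hm : 1 ≤ m)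
    (hval : ∀ x y : V, G.Adj x y → (H.neighborSet (α x y)).ncard = m)
    (hne : ∀ n : ℕ, Nonempty (towerFLG H ⟨V, inst, G, α⟩ n).V)
    (hnoiso : ∀ (n : ℕ) (x : (towerFLG H ⟨V, inst, G, α⟩ n).V),
      ∃ y, (towerFLG H ⟨V, inst, G, α⟩ n).G.Adj x y) :
    ∀ n k : ℕ, n ≤ k → ∀ μ : ℝ,
      HasNormLapEigenvalue (towerFLG H ⟨V, inst, G, α⟩ n) μ →
      HasNormLapEigenvalue (towerFLG H ⟨V, inst, G, α⟩ k) μ := by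
  have inv : ∀ n : ℕ,
      (∀ x y z, (towerFLG H ⟨V, inst, G, α⟩ n).G.Adj x y →
        (towerFLG H ⟨V, inst, G, α⟩ n).G.Adj x z →
        (towerFLG H ⟨V, inst, G, α⟩ n).lab x y = (towerFLG H ⟨V, inst, G, α⟩ n).lab x z) ∧
      (∀ x y, (towerFLG H ⟨V, inst, G, α⟩ n).G.Adj x y →
        (H.neighborSet ((towerFLG H ⟨V, inst, G, α⟩ n).lab x y)).ncard = m) := by
    intro n
    induction n with
    | zero => exact ⟨hlc, hval⟩
    | succ n ih =>
      refine ⟨?_, ?_⟩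
      · intro x y z hxy hxz
        exact ih.1 x.1.1 y.1.1 z.1.1 hxy.1 hxz.1
      · intro x y hxy
        exact ih.2 x.1.1 y.1.1 hxy.1
  intro n k hnk μ hev
  induction k, hnk using Nat.le_induction with
  | base => exact hev
  | succ k hk ih =>
    exact step_lift H (towerFLG H ⟨V, inst, G, α⟩ k) (hnoiso k) (inv k).1 m hm (inv k).2 μ ih
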